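/- Let (σ_i)_{i ∈ Fin n} be an abelian maximal CDP family (σ_i ∘ σ_j = σ_j ∘ σ_i for all i, j), and let (E_j)_{j ∈ Fin n} be its conjugated family. Then E_i ∘ E_j = E_{σ_i(j)} for all i, j ∈ Fin n; in particular the set {E_j} is an abelian group of permutations under composition. -/
import Mathlib


/-- For an abelian maximal CDP family with conjugated family `(E_j)`:
`E_i ∘ E_j = E_{σ_i(j)}`; in particular the `E_j` commute. -/
theorem conjugated_family_comp_law {n : ℕ} [NeZero n] (σ : Fin n → Equiv.Perm (Fin n))
    (hcdp : ∀ i j, i ≠ j → ∀ k, σ i k ≠ σ j k)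
    (hnorm : ∀ i, σ i 0 = i)
    (hab : ∀ i j, σ i * σ j = σ j * σ i)
    (E : Fin n → Equiv.Perm (Fin n)) (hE : ∀ j k, E j (σ k j) = k) :
    (∀ i j, E i * E j = E (σ i j)) ∧ (∀ i j, E i * E j = E j * E i) := by
  have hinj : ∀ x : Fin n, Function.Injective (fun k => σ k x) := by
    intro x k k' h
    by_contra hne
    exact hcdp k k' hne x h
  have hsurj : ∀ x : Fin n, Function.Surjective (fun k => σ k x) :=
    fun x => Finite.surjective_of_injective (hinj x)
  have hsig : ∀ j x, σ (E j x) j = x := by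
    intro j x
    apply (E j).injective
    rw [hE]
  have hgroup : ∀ i j, σ i * σ j = σ (σ i j) := by
    intro i j
    have key : ∀ x, (σ i * σ j) x = σ (σ i j) x := by
      intro x
      obtain ⟨m, hm⟩ := hsurj 0 x
      simp only at hm
      subst hm
      have h1 : (σ i * σ j) (σ m 0) = (σ i * σ j * σ m) 0 := rfl
      have h2 : σ i * σ j * σ m = σ m * (σ i * σ j) := by
        rw [mul_assoc, hab j m, ← mul_assoc, hab i m, mul_assoc]
      rw [h1, h2]
      have h4 : σ (σ i j) (σ m 0) = (σ (σ i j) * σ m) 0 := rfl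
      rw [h4, hab (σ i j) m]
      show σ m (σ i (σ j 0)) = σ m (σ (σ i j) 0)
      rw [hnorm j, hnorm (σ i j)]
    exact Equiv.ext key
  have main : ∀ i j, E i * E j = E (σ i j) := by
    intro i j
    apply Equiv.ext
    intro x
    set a := E j x with ha
    set b := E i a with hb
    have hsba : σ b i = a := hsig i a
    have hx : σ b (σ i j) = x := by
      have : σ b (σ i j) = (σ b * σ i) j := rfl
      rw [this, hgroup b i, hsba, ha, hsig]
    have h5 : E (σ i j) x = b := by rw [← hx, hE]
    show E i (E j x) = E (σ i j) x
    rw [h5, ← ha, ← hb]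
  refine ⟨main, fun i j => ?_⟩
  rw [main i j, main j i]
  congr 1
  have : (σ i * σ j) 0 = (σ j * σ i) 0 := by rw [hab]
  simpa [Equiv.Perm.mul_apply, hnorm] using this
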